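/- Let $n \geq 1$ and $d \neq n$ be integers, and consider the assignment to each $k \in \mathbb{Z}$ of integers $q_k, r_k$ with $dk = q_k n + r_k$, $0 \le r_k < n$. Define a relation on $\mathbb{Z} \times \{1,\dots,n\}$ by: $(\alpha,i) \sim (\beta,j)$ iff there exists $k \in \mathbb{Z}$ such that $i \equiv j + r_k \pmod n$ with $i \in \{1,\dots,n\}$ matching the appropriate lift, and $\alpha - \beta = \phi_j(k) - k$ where $\phi_j(k) = q_k$ when $j + r_k \le n$ and $\phi_j(k) = q_k + 1$ otherwise. Then $(\alpha,i) \sim (\beta,j)$ if and only if $d\alpha + i \equiv d\beta + j \pmod{|d-n|}$, and hence the number of equivalence classes is $|d - n|$. -/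

import Mathlib

/-- For the n-valued circle map of degree d ≠ n (lift-factors (dt+j-1)/n), with
dk = q_k n + r_k, 0 ≤ r_k < n: the Reidemeister relation on ℤ × {1,…,n}
(indices j ∈ {1,…,n} encoded as j-1 ∈ Fin n) is
(α,i) ∼ (β,j) iff ∃ k with i ≡ j + r_k (mod n) and α - β = φⱼ(k) - k, where
φⱼ(k) = q_k if j + r_k ≤ n and q_k + 1 otherwise.  This holds iff
dα + i ≡ dβ + j (mod |d-n|), and hence there are exactly |d-n| classes. -/
theorem stmt_10 (n : ℕ) (hn : 1 ≤ n) (d : ℤ) (hd : d ≠ n)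
    (R : ℤ × Fin n → ℤ × Fin n → Prop)
    (hR : ∀ p q, R p q ↔ ∃ k : ℤ,
      ((q.2 : ℤ) + d * k % n) % n = (p.2 : ℤ) ∧
      p.1 - q.1 = (if (q.2 : ℤ) + d * k % n < n then d * k / n
        else d * k / n + 1) - k) :
    (∀ p q : ℤ × Fin n,
      R p q ↔ Int.ModEq (d - n) (d * p.1 + ((p.2 : ℤ) + 1)) (d * q.1 + ((q.2 : ℤ) + 1))) ∧
    Nat.card (Quot R) = (d - n).natAbs := by
  have hn0 : (0:ℤ) < n := by exact_mod_cast hn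
  have hdn : d - (n:ℤ) ≠ 0 := sub_ne_zero.mpr hd
  have key : ∀ p q : ℤ × Fin n,
      R p q ↔ Int.ModEq (d - n) (d * p.1 + ((p.2 : ℤ) + 1)) (d * q.1 + ((q.2 : ℤ) + 1)) := by
    intro p q
    rw [hR, Int.modEq_iff_dvd]
    set i : ℤ := (p.2 : ℤ) with hi
    set j : ℤ := (q.2 : ℤ) with hj
    have hi0 : 0 ≤ i := Int.ofNat_nonneg _
    have hin : i < (n:ℤ) := by rw [hi]; exact_mod_cast p.2.isLt
    have hj0 : 0 ≤ j := Int.ofNat_nonneg _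
    have hjn : j < (n:ℤ) := by rw [hj]; exact_mod_cast q.2.isLt
    constructor
    · rintro ⟨k, h1, h2⟩
      set r : ℤ := d * k % n with hr
      set m : ℤ := d * k / n with hm
      have hr0 : 0 ≤ r := Int.emod_nonneg _ (by positivity)
      have hrn : r < n := Int.emod_lt_of_pos _ hn0
      have hdk : (n:ℤ) * m + r = d * k := Int.mul_ediv_add_emod (d*k) n
      by_cases hc : j + r < n
      · rw [if_pos hc] at h2
        have h1' : j + r = i := by rw [← h1, Int.emod_eq_of_lt (by linarith) hc]
        exact ⟨-m, by linear_combination (-d) * h2 + h1' - hdk⟩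
      · rw [if_neg hc] at h2
        push_neg at hc
        have h1' : j + r - n = i := by
          have he : (j + r) % (n:ℤ) = (j + r - n) % (n:ℤ) := by
            conv_lhs => rw [show j + r = (j + r - (n:ℤ)) + n by ring]
            rw [Int.add_emod_right]
          rw [← h1, he, Int.emod_eq_of_lt (by linarith) (by linarith)]
        exact ⟨-(m+1), by linear_combination (-d) * h2 + h1' - hdk⟩
    · rintro ⟨M', hM⟩
      set M : ℤ := -M' with hMdef
      set k : ℤ := M - (p.1 - q.1) with hk
      have hdk : d * k = n * M + (i - j) := by
        rw [hk, hMdef]; linear_combination hM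
      refine ⟨k, ?_, ?_⟩
      · -- first condition
        by_cases hij : j ≤ i
        · have hdk' : d * k = (i - j) + n * M := by linarith
          have hmod : d * k % n = i - j := by
            rw [hdk', Int.add_mul_emod_self_left, Int.emod_eq_of_lt (by linarith) (by linarith)]
          rw [hmod]
          have : j + (i - j) = i := by ring
          rw [this, Int.emod_eq_of_lt hi0 hin]
        · push_neg at hij
          have hdk' : d * k = (i - j + n) + n * (M - 1) := by linarith
          have hmod : d * k % n = i - j + n := by
            rw [hdk', Int.add_mul_emod_self_left, Int.emod_eq_of_lt (by linarith) (by linarith)]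
          rw [hmod]
          have : j + (i - j + n) = i + n := by ring
          rw [this, Int.add_emod_right, Int.emod_eq_of_lt hi0 hin]
      · by_cases hij : j ≤ i
        · have hdk' : d * k = (i - j) + n * M := by linarith
          have hmod : d * k % n = i - j := by
            rw [hdk', Int.add_mul_emod_self_left, Int.emod_eq_of_lt (by linarith) (by linarith)]
          have hdiv : d * k / n = M := by
            rw [hdk', Int.add_mul_ediv_left _ _ (by positivity : (n:ℤ) ≠ 0),
              Int.ediv_eq_zero_of_lt (by linarith) (by linarith), zero_add]
          rw [hmod, if_pos (by linarith), hdiv, hk]; ring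
        · push_neg at hij
          have hdk' : d * k = (i - j + n) + n * (M - 1) := by linarith
          have hmod : d * k % n = i - j + n := by
            rw [hdk', Int.add_mul_emod_self_left, Int.emod_eq_of_lt (by linarith) (by linarith)]
          have hdiv : d * k / n = M - 1 := by
            rw [hdk', Int.add_mul_ediv_left _ _ (by positivity : (n:ℤ) ≠ 0),
              Int.ediv_eq_zero_of_lt (by linarith) (by linarith), zero_add]
          rw [hmod, if_neg (by push_neg; linarith), hdiv, hk]; ring
  refine ⟨key, ?_⟩
  set N := (d - (n:ℤ)).natAbs with hNdef
  have hN0 : N ≠ 0 := Int.natAbs_ne_zero.mpr hdn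
  haveI : NeZero N := ⟨hN0⟩
  have bridge : ∀ a b : ℤ, a ≡ b [ZMOD (d - n)] ↔ a ≡ b [ZMOD (N:ℤ)] := by
    intro a b
    rw [Int.modEq_iff_dvd, Int.modEq_iff_dvd, hNdef, Int.natAbs_dvd]
  let f : ℤ × Fin n → ZMod N := fun p => ((d * p.1 + ((p.2:ℤ)+1) : ℤ) : ZMod N)
  have hf : ∀ p q, R p q ↔ f p = f q := by
    intro p q
    rw [key p q, bridge]
    exact (ZMod.intCast_eq_intCast_iff _ _ _).symm
  let e : Quot R → ZMod N := Quot.lift f (fun a b h => (hf a b).mp h)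
  have hbij : Function.Bijective e := by
    constructor
    · intro x y
      induction x using Quot.ind with | _ a =>
      induction y using Quot.ind with | _ b =>
      intro h
      exact Quot.sound ((hf a b).mpr h)
    · intro c
      obtain ⟨t, ht⟩ := ZMod.intCast_surjective (n := N) c
      set α : ℤ := (t - 1) / n with hα
      set s : ℤ := (t - 1) % n with hs
      have hs0 : 0 ≤ s := Int.emod_nonneg _ (by positivity)
      have hsn : s < n := Int.emod_lt_of_pos _ hn0
      have hts : (n:ℤ) * α + s = t - 1 := Int.mul_ediv_add_emod (t-1) n
      have hsnat : s.toNat < n := by omega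
      refine ⟨Quot.mk _ (α, ⟨s.toNat, hsnat⟩), ?_⟩
      show f (α, ⟨s.toNat, hsnat⟩) = c
      have hcast : ((⟨s.toNat, hsnat⟩ : Fin n) : ℤ) = s := by
        simp [Int.toNat_of_nonneg hs0]
      rw [← ht]
      show ((d * α + (((⟨s.toNat, hsnat⟩ : Fin n) : ℤ)+1) : ℤ) : ZMod N) = (t : ZMod N)
      rw [hcast, ZMod.intCast_eq_intCast_iff]
      rw [← bridge, Int.modEq_iff_dvd]
      exact ⟨-α, by linear_combination -hts⟩
  calc Nat.card (Quot R) = Nat.card (ZMod N) := Nat.card_congr (Equiv.ofBijective e hbij)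
  _ = N := Nat.card_zmod N
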